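/- Scherk's theorem: let w be an isometry of an n-dimensional euclidean space E whose move-set is k-dimensional. Then the minimal number of reflections (isometries fixing a hyperplane pointwise) needed to express w as a product is k if w has a fixed point, and k+2 if w has no fixed point. -/

import Mathlib

open Module

/-- A reflection of a euclidean space: a nontrivial isometry fixing an affine
hyperplane (a nonempty affine subspace whose direction has codimension one)
pointwise. -/
def IsEuclideanReflection {V E : Type*} [NormedAddCommGroup V] [InnerProductSpace ℝ V]
    [FiniteDimensional ℝ V] [MetricSpace E] [NormedAddTorsor V E] (r : E ≃ᵢ E) : Prop :=
  r ≠ 1 ∧ ∃ H : AffineSubspace ℝ E, (H : Set E).Nonempty ∧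
    finrank ℝ H.direction + 1 = finrank ℝ V ∧ ∀ x ∈ H, r x = x

open Submodule RealInnerProductSpace

set_option linter.unusedSectionVars false

section Aux

variable {V E : Type*} [NormedAddCommGroup V] [InnerProductSpace ℝ V]
  [FiniteDimensional ℝ V] [MetricSpace E] [NormedAddTorsor V E]

noncomputable def Lin (w : E ≃ᵢ E) : V ≃ₗᵢ[ℝ] V :=
  w.toRealAffineIsometryEquiv.linearIsometryEquiv

lemma lin_vadd (w : E ≃ᵢ E) (x : E) (v : V) : w (v +ᵥ x) = Lin w v +ᵥ w x := by
  have h := w.toRealAffineIsometryEquiv.map_vadd x v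
  exact h

lemma lin_eq (w : E ≃ᵢ E) (x : E) (v : V) : Lin w v = w (v +ᵥ x) -ᵥ w x := by
  rw [lin_vadd]; simp

lemma lin_mul (f g : E ≃ᵢ E) (v : V) : Lin (f * g) v = Lin f (Lin g v) := by
  classical
  obtain ⟨x⟩ : Nonempty E := inferInstance
  rw [lin_eq (f * g) x, lin_eq g x, lin_eq f (g x)]
  simp [IsometryEquiv.mul_apply]

lemma lin_one (v : V) : Lin (1 : E ≃ᵢ E) v = v := by
  obtain ⟨x⟩ : Nonempty E := inferInstance
  rw [lin_eq (1 : E ≃ᵢ E) x]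
  simp

lemma apply_eq_lin (w : E ≃ᵢ E) (p x : E) : w x = Lin w (x -ᵥ p) +ᵥ w p := by
  conv_lhs => rw [← vsub_vadd x p, lin_vadd]

set_option linter.unusedSectionVars false

/-- data of a reflection: a nonzero normal vector `α`. -/
def ReflData (r : E ≃ᵢ E) (α : V) : Prop :=
  α ≠ 0 ∧ (∀ x : E, r x -ᵥ x ∈ (ℝ ∙ α)) ∧ Lin r α = -α ∧
    ∀ v : V, ⟪α, v⟫ = 0 → Lin r v = v

lemma ReflData.formula {r : E ≃ᵢ E} {α : V} (h : ReflData r α) (v : V) :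
    Lin r v = v - (2 * (⟪α, v⟫ / ‖α‖ ^ 2)) • α := by
  obtain ⟨hα, -, hneg, hfix⟩ := h
  set c : ℝ := ⟪α, v⟫ / ‖α‖ ^ 2 with hc
  have hα2 : ‖α‖ ^ 2 ≠ 0 := pow_ne_zero _ (norm_ne_zero_iff.2 hα)
  have h1 : ⟪α, v - c • α⟫ = 0 := by
    rw [inner_sub_right, real_inner_smul_right, real_inner_self_eq_norm_sq]
    field_simp [hc]
    rw [hc, div_mul_cancel₀ _ hα2, sub_self]
  have h2 : Lin r (v - c • α) = v - c • α := hfix _ h1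
  have : Lin r ((v - c • α) + c • α) = (v - c • α) + c • (-α) := by
    rw [map_add, map_smul, h2, hneg]
  rw [sub_add_cancel] at this
  rw [this]
  rw [smul_neg, two_mul, add_smul]
  abel

lemma ReflData.invol {r : E ≃ᵢ E} {α : V} (h : ReflData r α) (v : V) :
    Lin r (Lin r v) = v := by
  have hf := h.formula v
  rw [hf, map_sub, map_smul, h.2.2.1, hf, smul_neg, sub_neg_eq_add, sub_add_cancel]

lemma exists_reflData (r : E ≃ᵢ E) (hr : IsEuclideanReflection r) : ∃ α : V, ReflData r α := by
  obtain ⟨hne, H, ⟨p, hp⟩, hdim, hfix⟩ := hr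
  set M := H.direction with hM
  have hrp : r p = p := hfix _ hp
  have hRM : ∀ v ∈ M, Lin r v = v := by
    intro v hv
    have hmem : v +ᵥ p ∈ H := AffineSubspace.vadd_mem_of_mem_direction hv hp
    rw [lin_eq r p v, hfix _ hmem, hrp, vadd_vsub]
  have hdimO : finrank ℝ Mᗮ = 1 := by
    have := Submodule.finrank_add_finrank_orthogonal (K := M)
    omega
  obtain ⟨α, hαmem, hα0⟩ : ∃ α ∈ Mᗮ, α ≠ 0 := by
    have : Mᗮ ≠ ⊥ := by
      intro hbot
      rw [hbot, finrank_bot] at hdimO; omega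
    obtain ⟨α, hm, h0⟩ := Submodule.exists_mem_ne_zero_of_ne_bot this
    exact ⟨α, hm, h0⟩
  have hspan : (ℝ ∙ α) = Mᗮ := by
    apply Submodule.eq_of_le_of_finrank_le
    · rwa [Submodule.span_singleton_le_iff_mem]
    · rw [hdimO, finrank_span_singleton hα0]
  -- Lin r preserves Mᗮ
  have hRα : Lin r α ∈ Mᗮ := by
    rw [Submodule.mem_orthogonal]
    intro u hu
    have : ⟪u, Lin r α⟫ = ⟪Lin r u, Lin r α⟫ := by rw [hRM u hu]
    rw [this, LinearIsometryEquiv.inner_map_map]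
    exact (Submodule.mem_orthogonal M α).1 hαmem u hu
  obtain ⟨c, hcα⟩ : ∃ c : ℝ, Lin r α = c • α := by
    rw [← hspan] at hRα
    exact (Submodule.mem_span_singleton.1 hRα).imp fun c h => h.symm
  have hcpm : c = 1 ∨ c = -1 := by
    have hn : ‖Lin r α‖ = ‖α‖ := (Lin r).norm_map α
    rw [hcα, norm_smul] at hn
    have : |c| = 1 := by
      have hαn : ‖α‖ ≠ 0 := norm_ne_zero_iff.2 hα0
      field_simp at hn
      simpa [Real.norm_eq_abs] using hn
    rcases abs_eq (by norm_num : (0:ℝ) ≤ 1) |>.1 this with h | h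
    · exact Or.inl h
    · exact Or.inr h
  -- decomposition of arbitrary vectors
  have hdecomp : ∀ v : V, ∃ m ∈ M, ∃ s : ℝ, v = m + s • α := by
    intro v
    obtain ⟨y, hy, z, hz, hv⟩ := M.exists_add_mem_mem_orthogonal v
    rw [← hspan] at hz
    obtain ⟨s, hs⟩ := Submodule.mem_span_singleton.1 hz
    exact ⟨y, hy, s, by rw [hv, ← hs]⟩
  rcases hcpm with h1 | h1
  · exfalso
    apply hne
    ext x
    obtain ⟨m, hm, s, hms⟩ := hdecomp (x -ᵥ p)
    have : Lin r (x -ᵥ p) = x -ᵥ p := by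
      rw [hms, map_add, map_smul, hRM m hm, hcα, h1, one_smul]
    rw [apply_eq_lin r p x, this, hrp, vsub_vadd]
    rfl
  · rw [h1] at hcα
    refine ⟨α, hα0, ?_, by rw [hcα, neg_one_smul], ?_⟩
    · intro x
      have hx : r x -ᵥ x = Lin r (x -ᵥ p) - (x -ᵥ p) := by
        rw [apply_eq_lin r p x, hrp, vadd_vsub_assoc, sub_eq_add_neg, neg_vsub_eq_vsub_rev]
      obtain ⟨m, hm, s, hms⟩ := hdecomp (x -ᵥ p)
      rw [hx, hms, map_add, map_smul, hRM m hm, hcα]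
      have : m + s • (-1 : ℝ) • α - (m + s • α) = (-2 * s) • α := by
        simp [smul_smul]
        module
      rw [this]
      exact Submodule.smul_mem _ _ (Submodule.mem_span_singleton_self α)
    · intro v hv
      have : v ∈ M := by
        have hvmem : v ∈ (ℝ ∙ α)ᗮ :=
          Submodule.mem_orthogonal_singleton_iff_inner_right.2 hv
        rwa [hspan, Submodule.orthogonal_orthogonal] at hvmem
      exact hRM v this

lemma ReflData.lin_sub_mem {r : E ≃ᵢ E} {α : V} (h : ReflData r α) (v : V) :
    Lin r v - v ∈ (ℝ ∙ α) := by
  rw [h.formula v]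
  have : v - (2 * (⟪α, v⟫ / ‖α‖ ^ 2)) • α - v = (-(2 * (⟪α, v⟫ / ‖α‖ ^ 2))) • α := by
    rw [neg_smul]; abel
  rw [this]
  exact Submodule.smul_mem _ _ (Submodule.mem_span_singleton_self α)

lemma prod_vsub_mem (l : List (E ≃ᵢ E)) (U : Submodule ℝ V)
    (h : ∀ r ∈ l, ∀ x : E, r x -ᵥ x ∈ U) : ∀ x : E, l.prod x -ᵥ x ∈ U := by
  induction l with
  | nil => intro x; simp
  | cons r l ih =>
    intro x
    have h1 : l.prod x -ᵥ x ∈ U := ih (fun s hs => h s (List.mem_cons_of_mem _ hs)) x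
    have h2 : r (l.prod x) -ᵥ l.prod x ∈ U := h r (List.mem_cons_self) _
    have heq : (r :: l).prod x -ᵥ x = (r (l.prod x) -ᵥ l.prod x) + (l.prod x -ᵥ x) := by
      rw [List.prod_cons, IsometryEquiv.mul_apply, vsub_add_vsub_cancel]
    rw [heq]
    exact U.add_mem h2 h1

lemma master (l : List (E ≃ᵢ E)) (hl : ∀ r ∈ l, IsEuclideanReflection r) :
    ∃ U : Submodule ℝ V, finrank ℝ U ≤ l.length ∧
      (∀ x : E, l.prod x -ᵥ x ∈ U) ∧
      (∀ v : V, Lin l.prod v - v ∈ U) ∧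
      (finrank ℝ U = l.length → ∀ v : V, Lin l.prod v = v → v ∈ Uᗮ) := by
  induction l with
  | nil =>
    refine ⟨⊥, by simp, by simp, ?_, ?_⟩
    · intro v; simp [lin_one]
    · intro _ v _; simp
  | cons r l ih =>
    obtain ⟨U', hU'len, hU'mov, hU'lin, hU'key⟩ :=
      ih (fun s hs => hl s (List.mem_cons_of_mem _ hs))
    obtain ⟨α, hαdata⟩ := exists_reflData r (hl r (List.mem_cons_self))
    have hα0 : α ≠ 0 := hαdata.1
    have hαmov := hαdata.2.1
    have h1 : finrank ℝ (ℝ ∙ α) = 1 := finrank_span_singleton hα0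
    have hsum := Submodule.finrank_sup_add_finrank_inf_eq (ℝ ∙ α) U'
    have hsuple : finrank ℝ ((ℝ ∙ α) ⊔ U' : Submodule ℝ V) ≤ (r :: l).length := by
      rw [List.length_cons]
      omega
    refine ⟨(ℝ ∙ α) ⊔ U', hsuple, ?_, ?_, ?_⟩
    · intro x
      have heq : (r :: l).prod x -ᵥ x = (r (l.prod x) -ᵥ l.prod x) + (l.prod x -ᵥ x) := by
        rw [List.prod_cons, IsometryEquiv.mul_apply, vsub_add_vsub_cancel]
      rw [heq]
      exact Submodule.add_mem _ (Submodule.mem_sup_left (hαmov _))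
        (Submodule.mem_sup_right (hU'mov x))
    · intro v
      have heq : Lin (r :: l).prod v - v =
          (Lin r (Lin l.prod v) - Lin l.prod v) + (Lin l.prod v - v) := by
        rw [List.prod_cons, lin_mul]; abel
      rw [heq]
      exact Submodule.add_mem _ (Submodule.mem_sup_left (hαdata.lin_sub_mem _))
        (Submodule.mem_sup_right (hU'lin v))
    · intro hrank v hv
      rw [List.length_cons] at hrank
      have hinf : finrank ℝ ((ℝ ∙ α) ⊓ U' : Submodule ℝ V) = 0 := by omega
      have hU'rank : finrank ℝ U' = l.length := by omega
      have hαnotin : α ∉ U' := by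
        intro hmem
        have hbot : ((ℝ ∙ α) ⊓ U' : Submodule ℝ V) = ⊥ := Submodule.finrank_eq_zero.1 hinf
        have : α ∈ ((ℝ ∙ α) ⊓ U' : Submodule ℝ V) :=
          ⟨Submodule.mem_span_singleton_self α, hmem⟩
        rw [hbot, Submodule.mem_bot] at this
        exact hα0 this
      set P : V ≃ₗᵢ[ℝ] V := Lin l.prod with hP
      have hPv : Lin r (P v) = v := by
        rw [List.prod_cons, lin_mul] at hv
        exact hv
      have hPv2 : P v = Lin r v := by
        have h2 := hαdata.invol (P v)
        rw [hPv] at h2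
        exact h2.symm
      have hform := hαdata.formula v
      set c : ℝ := 2 * (⟪α, v⟫ / ‖α‖ ^ 2) with hc
      have hPU : P v - v ∈ U' := hU'lin v
      have heq2 : P v - v = -(c • α) := by rw [hPv2, hform]; abel
      rw [heq2] at hPU
      have hc0 : c = 0 := by
        by_contra hcne
        apply hαnotin
        have h3 : (-c)⁻¹ • (-(c • α)) = α := by
          rw [smul_neg, smul_smul]
          field_simp
          simp
        rw [← h3]
        exact U'.smul_mem _ hPU
      have hinner : ⟪α, v⟫ = 0 := by
        have hα2 : ‖α‖ ^ 2 ≠ 0 := pow_ne_zero _ (norm_ne_zero_iff.2 hα0)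
        rw [hc] at hc0
        field_simp at hc0
        linarith
      have hPvv : P v = v := by
        have h4 := heq2
        rw [hc0] at h4
        simp only [zero_smul, neg_zero, sub_eq_zero] at h4
        exact h4
      have hvU' : v ∈ U'ᗮ := hU'key hU'rank v hPvv
      rw [Submodule.mem_orthogonal]
      intro u hu
      obtain ⟨y, hy, z, hz, rfl⟩ := Submodule.mem_sup.1 hu
      obtain ⟨s, rfl⟩ := Submodule.mem_span_singleton.1 hy
      rw [inner_add_left, real_inner_smul_left, hinner,
        (Submodule.mem_orthogonal U' v).1 hvU' z hz]
      ring

lemma mov_formula (w : E ≃ᵢ E) (x0 x : E) :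
    w x -ᵥ x = (w x0 -ᵥ x0) + (Lin w (x -ᵥ x0) - (x -ᵥ x0)) := by
  conv_lhs => rw [apply_eq_lin w x0 x]
  rw [vadd_vsub_assoc]
  have h : w x0 -ᵥ x = (w x0 -ᵥ x0) - (x -ᵥ x0) := by rw [vsub_sub_vsub_cancel_right]
  rw [h]
  abel

lemma vectorSpan_mov (w : E ≃ᵢ E) (x0 : E) :
    vectorSpan ℝ {v : V | ∃ x : E, w x -ᵥ x = v} =
      LinearMap.range ((Lin w).toLinearEquiv.toLinearMap - LinearMap.id) := by
  set W := LinearMap.range ((Lin w).toLinearEquiv.toLinearMap - LinearMap.id) with hW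
  apply le_antisymm
  · rw [vectorSpan, Submodule.span_le]
    rintro d hd
    rw [Set.mem_vsub] at hd
    obtain ⟨v1, hv1, v2, hv2, rfl⟩ := hd
    obtain ⟨x1, rfl⟩ := hv1
    obtain ⟨x2, rfl⟩ := hv2
    rw [SetLike.mem_coe, mov_formula w x0 x1, mov_formula w x0 x2]
    refine ⟨(x1 -ᵥ x0) - (x2 -ᵥ x0), ?_⟩
    simp only [LinearMap.sub_apply, LinearMap.id_apply, map_sub, vsub_eq_sub,
      LinearEquiv.coe_coe, LinearIsometryEquiv.coe_toLinearEquiv]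
    abel
  · rintro v ⟨u, rfl⟩
    have h1 : (w (u +ᵥ x0) -ᵥ (u +ᵥ x0)) -ᵥ (w x0 -ᵥ x0) =
        ((Lin w).toLinearEquiv.toLinearMap - LinearMap.id : V →ₗ[ℝ] V) u := by
      rw [vsub_eq_sub, mov_formula w x0 (u +ᵥ x0), vadd_vsub]
      simp only [LinearMap.sub_apply, LinearMap.id_apply,
        LinearEquiv.coe_coe, LinearIsometryEquiv.coe_toLinearEquiv]
      abel
    rw [← h1]
    exact Submodule.subset_span ⟨_, ⟨_, rfl⟩, _, ⟨x0, rfl⟩, rfl⟩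

lemma fixed_iff (w : E ≃ᵢ E) (x0 : E) :
    (∃ x : E, w x = x) ↔
      (w x0 -ᵥ x0) ∈ LinearMap.range ((Lin w).toLinearEquiv.toLinearMap - LinearMap.id) := by
  constructor
  · rintro ⟨x, hx⟩
    have h0 : (0 : V) = (w x0 -ᵥ x0) + (Lin w (x -ᵥ x0) - (x -ᵥ x0)) := by
      rw [← mov_formula, hx, vsub_self]
    have h1 : w x0 -ᵥ x0 = -(Lin w (x -ᵥ x0) - (x -ᵥ x0)) :=
      eq_neg_of_add_eq_zero_left h0.symm
    refine ⟨-(x -ᵥ x0), ?_⟩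
    simp only [LinearMap.sub_apply, LinearMap.id_apply, map_neg,
      LinearEquiv.coe_coe, LinearIsometryEquiv.coe_toLinearEquiv]
    rw [h1]
  · rintro ⟨u, hu⟩
    refine ⟨(-u) +ᵥ x0, ?_⟩
    rw [← vsub_eq_zero_iff_eq, mov_formula w x0 ((-u) +ᵥ x0), vadd_vsub]
    simp only [LinearMap.sub_apply, LinearMap.id_apply, map_neg,
      LinearEquiv.coe_coe, LinearIsometryEquiv.coe_toLinearEquiv] at hu ⊢
    rw [← hu]
    abel

noncomputable def atPoint (p : E) (R : V ≃ₗᵢ[ℝ] V) : E ≃ᵢ E :=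
  (((AffineIsometryEquiv.vaddConst ℝ p).symm.trans R.toAffineIsometryEquiv).trans
    (AffineIsometryEquiv.vaddConst ℝ p)).toIsometryEquiv

lemma atPoint_apply (p : E) (R : V ≃ₗᵢ[ℝ] V) (x : E) :
    atPoint p R x = R (x -ᵥ p) +ᵥ p := rfl

lemma atPoint_mul (p : E) (R S : V ≃ₗᵢ[ℝ] V) :
    atPoint p (R * S) = atPoint p R * atPoint p S := by
  ext x
  rw [IsometryEquiv.mul_apply, atPoint_apply, atPoint_apply, atPoint_apply, vadd_vsub]
  rfl

lemma atPoint_one (p : E) : atPoint p (1 : V ≃ₗᵢ[ℝ] V) = 1 := by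
  ext x
  rw [atPoint_apply]
  simp

lemma atPoint_prod (p : E) (L : List (V ≃ₗᵢ[ℝ] V)) :
    (L.map (atPoint p)).prod = atPoint p L.prod := by
  induction L with
  | nil => simp [atPoint_one]
  | cons R L ih => simp [List.prod_cons, atPoint_mul, ih]

lemma isReflection_atPoint (p : E) (α : V) (hα : α ≠ 0) :
    IsEuclideanReflection (atPoint p (reflection (ℝ ∙ α)ᗮ)) := by
  constructor
  · intro h1
    have h2 : atPoint p (reflection (ℝ ∙ α)ᗮ) (α +ᵥ p) = α +ᵥ p := by rw [h1]; rfl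
    rw [atPoint_apply, vadd_vsub, reflection_orthogonalComplement_singleton_eq_neg] at h2
    have := vadd_right_cancel p h2
    exact hα (by rw [neg_eq_iff_add_eq_zero, ← two_smul ℝ α, smul_eq_zero] at this; simpa using this)
  · refine ⟨AffineSubspace.mk' p (ℝ ∙ α)ᗮ, ⟨p, AffineSubspace.self_mem_mk' _ _⟩, ?_, ?_⟩
    · rw [AffineSubspace.direction_mk']
      have h1 := Submodule.finrank_add_finrank_orthogonal (K := (ℝ ∙ α))
      rw [finrank_span_singleton hα] at h1
      omega
    · intro x hx
      rw [AffineSubspace.mem_mk'] at hx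
      rw [atPoint_apply, reflection_mem_subspace_eq_self hx, vsub_vadd]

lemma linIso_eq_one_of_rank_zero (R : V ≃ₗᵢ[ℝ] V)
    (h : finrank ℝ (LinearMap.range (R.toLinearEquiv.toLinearMap - LinearMap.id)) = 0) :
    R = 1 := by
  have hbot : LinearMap.range (R.toLinearEquiv.toLinearMap - LinearMap.id) = ⊥ :=
    Submodule.finrank_eq_zero.1 h
  ext v
  have : (R.toLinearEquiv.toLinearMap - LinearMap.id : V →ₗ[ℝ] V) v = 0 := by
    rw [← Submodule.mem_bot (R := ℝ), ← hbot]
    exact ⟨v, rfl⟩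
  simp only [LinearMap.sub_apply, LinearMap.id_apply, LinearEquiv.coe_coe,
    LinearIsometryEquiv.coe_toLinearEquiv, sub_eq_zero] at this
  simpa using this

lemma cartan : ∀ (m : ℕ) (R : V ≃ₗᵢ[ℝ] V),
    finrank ℝ (LinearMap.range (R.toLinearEquiv.toLinearMap - LinearMap.id)) ≤ m →
    ∃ A : List V, A.length ≤ m ∧ (∀ α ∈ A, α ≠ 0) ∧
      (A.map fun α => (reflection (ℝ ∙ α)ᗮ : V ≃ₗᵢ[ℝ] V)).prod = R := by
  intro m
  induction m with
  | zero =>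
    intro R h
    refine ⟨[], by simp, by simp, ?_⟩
    rw [List.map_nil, List.prod_nil, (linIso_eq_one_of_rank_zero R (by omega)).symm]
  | succ m ih =>
    intro R h
    by_cases hR : ∀ v : V, R v = v
    · refine ⟨[], by simp, by simp, ?_⟩
      rw [List.map_nil, List.prod_nil]
      ext v
      simpa using (hR v).symm
    · push_neg at hR
      obtain ⟨v, hv⟩ := hR
      set α : V := R v - v with hαdef
      have hα0 : α ≠ 0 := sub_ne_zero.2 hv
      set r : V ≃ₗᵢ[ℝ] V := reflection (ℝ ∙ α)ᗮ with hrdef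
      have hrα : r α = -α := reflection_orthogonalComplement_singleton_eq_neg α
      have hrfix : ∀ u : V, ⟪u, α⟫ = 0 → r u = u := fun u hu =>
        reflection_mem_subspace_eq_self (Submodule.mem_orthogonal_singleton_iff_inner_left.2 hu)
      have hrRv : r (R v) = v := by
        have hdecomp : R v = (2⁻¹ : ℝ) • (R v + v) + (2⁻¹ : ℝ) • α := by
          rw [hαdef]; module
        have hinner : ⟪(2⁻¹ : ℝ) • (R v + v), α⟫ = 0 := by
          rw [real_inner_smul_left, hαdef, inner_add_left, inner_sub_right, inner_sub_right,
            real_inner_self_eq_norm_sq, real_inner_self_eq_norm_sq]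
          have : ‖R v‖ = ‖v‖ := R.norm_map v
          rw [real_inner_comm v (R v)]
          rw [this]
          ring
        rw [hdecomp, map_add, hrfix _ hinner, map_smul, hrα, hαdef]
        module
      have hfixR : ∀ u : V, R u = u → r u = u := by
        intro u hu
        apply hrfix
        rw [hαdef, inner_sub_right]
        nth_rewrite 1 [← hu]
        rw [LinearIsometryEquiv.inner_map_map, sub_self]
      set R' : V ≃ₗᵢ[ℝ] V := r * R with hR'def
      have hker : LinearMap.ker (R.toLinearEquiv.toLinearMap - LinearMap.id) <
          LinearMap.ker (R'.toLinearEquiv.toLinearMap - LinearMap.id) := by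
        rw [SetLike.lt_iff_le_and_exists]
        constructor
        · intro u hu
          simp only [LinearMap.mem_ker, LinearMap.sub_apply, LinearMap.id_apply,
            LinearEquiv.coe_coe, LinearIsometryEquiv.coe_toLinearEquiv, sub_eq_zero] at hu ⊢
          have : R' u = r (R u) := rfl
          rw [this, hu, hfixR u hu]
        · refine ⟨v, ?_, ?_⟩
          · simp only [LinearMap.mem_ker, LinearMap.sub_apply, LinearMap.id_apply,
              LinearEquiv.coe_coe, LinearIsometryEquiv.coe_toLinearEquiv, sub_eq_zero]
            exact hrRv
          · simp only [LinearMap.mem_ker, LinearMap.sub_apply, LinearMap.id_apply,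
              LinearEquiv.coe_coe, LinearIsometryEquiv.coe_toLinearEquiv, sub_eq_zero]
            exact hv
      have hrank : finrank ℝ (LinearMap.range (R'.toLinearEquiv.toLinearMap - LinearMap.id)) ≤ m := by
        have h1 := LinearMap.finrank_range_add_finrank_ker
          (R.toLinearEquiv.toLinearMap - LinearMap.id : V →ₗ[ℝ] V)
        have h2 := LinearMap.finrank_range_add_finrank_ker
          (R'.toLinearEquiv.toLinearMap - LinearMap.id : V →ₗ[ℝ] V)
        have h3 := Submodule.finrank_lt_finrank_of_lt hker
        omega
      obtain ⟨A, hlen, hne, hprod⟩ := ih R' hrank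
      refine ⟨α :: A, by simpa using hlen, ?_, ?_⟩
      · intro β hβ
        rcases List.mem_cons.1 hβ with h | h
        · rw [h]; exact hα0
        · exact hne β h
      · rw [List.map_cons, List.prod_cons, hprod, hR'def]
        ext u
        have h5 : (r * (r * R)) u = r (r (R u)) := rfl
        rw [h5, hrdef, reflection_reflection]

end Aux

/-- Scherk's theorem: if `w` is an isometry of a euclidean space whose move-set
`Mov(w) = {w(x) -ᵥ x}` has dimension `k`, then the minimal number of reflections
needed to express `w` is `k` when `w` has a fixed point and `k + 2` otherwise. -/
theorem scherk_reflection_length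
    {V E : Type*} [NormedAddCommGroup V] [InnerProductSpace ℝ V] [FiniteDimensional ℝ V]
    [MetricSpace E] [NormedAddTorsor V E] (w : E ≃ᵢ E) (k : ℕ)
    (hk : k = finrank ℝ (vectorSpan ℝ {v : V | ∃ x : E, w x -ᵥ x = v})) :
    ((∃ x : E, w x = x) →
      IsLeast {m : ℕ | ∃ l : List (E ≃ᵢ E), (∀ r ∈ l, IsEuclideanReflection r) ∧
        l.length = m ∧ l.prod = w} k) ∧
    ((¬ ∃ x : E, w x = x) →
      IsLeast {m : ℕ | ∃ l : List (E ≃ᵢ E), (∀ r ∈ l, IsEuclideanReflection r) ∧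
        l.length = m ∧ l.prod = w} (k + 2)) := by
  classical
  obtain ⟨x0⟩ : Nonempty E := inferInstance
  set L : V ≃ₗᵢ[ℝ] V := Lin w with hL
  set W : Submodule ℝ V := LinearMap.range (L.toLinearEquiv.toLinearMap - LinearMap.id)
    with hWdef
  have hkW : k = finrank ℝ W := by rw [hk, vectorSpan_mov w x0]
  set S : Set ℕ := {m : ℕ | ∃ l : List (E ≃ᵢ E), (∀ r ∈ l, IsEuclideanReflection r) ∧
    l.length = m ∧ l.prod = w} with hS
  -- auxiliary: W is contained in any U that contains the move set differences
  have hWU_of : ∀ (l : List (E ≃ᵢ E)) (U : Submodule ℝ V), l.prod = w →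
      (∀ x : E, l.prod x -ᵥ x ∈ U) → W ≤ U := by
    intro l U hprodeq hUmov
    rw [hWdef, ← vectorSpan_mov w x0, vectorSpan, Submodule.span_le]
    rintro d hd
    rw [Set.mem_vsub] at hd
    obtain ⟨v1, ⟨x1, rfl⟩, v2, ⟨x2, rfl⟩, rfl⟩ := hd
    have h1 : w x1 -ᵥ x1 ∈ U := by rw [← hprodeq]; exact hUmov x1
    have h2 : w x2 -ᵥ x2 ∈ U := by rw [← hprodeq]; exact hUmov x2
    exact U.sub_mem h1 h2
  -- generic lower bound
  have hlow : ∀ m ∈ S, k ≤ m := by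
    rintro m ⟨l, hrefl, hlen, hprodw⟩
    obtain ⟨U, hUlen, hUmov, -, -⟩ := master l hrefl
    have hWU : W ≤ U := hWU_of l U hprodw hUmov
    calc k = finrank ℝ W := hkW
      _ ≤ finrank ℝ U := Submodule.finrank_mono hWU
      _ ≤ l.length := hUlen
      _ = m := hlen
  constructor
  · -- fixed point case
    rintro ⟨x, hx⟩
    have hwL : w = atPoint x L := by
      ext y
      have h := apply_eq_lin w x y
      rw [hx] at h
      rw [atPoint_apply, hL]
      exact h
    have hrank : finrank ℝ W ≤ k := le_of_eq hkW.symm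
    obtain ⟨A, hAlen, hAne, hAprod⟩ := cartan k L (by rw [← hWdef]; exact hrank)
    set l : List (E ≃ᵢ E) := A.map (fun α => atPoint x (reflection (ℝ ∙ α)ᗮ)) with hl
    have hcomp : (fun α : V => atPoint x (reflection (ℝ ∙ α)ᗮ)) =
        (atPoint x) ∘ (fun α : V => (reflection (ℝ ∙ α)ᗮ : V ≃ₗᵢ[ℝ] V)) := rfl
    have hlprod : l.prod = w := by
      rw [hl, hcomp, ← List.map_map, atPoint_prod, hAprod, hwL]
    have hlrefl : ∀ r ∈ l, IsEuclideanReflection r := by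
      intro r hr
      rw [hl] at hr
      obtain ⟨α, hα, rfl⟩ := List.mem_map.1 hr
      exact isReflection_atPoint x α (hAne α hα)
    have hmem : l.length ∈ S := ⟨l, hlrefl, rfl, hlprod⟩
    have hle : l.length ≤ k := by rw [hl, List.length_map]; exact hAlen
    have := hlow _ hmem
    have hkmem : k ∈ S := by
      have : l.length = k := le_antisymm hle this
      rwa [this] at hmem
    exact ⟨hkmem, hlow⟩
  · -- no fixed point case
    intro hnofix
    set t : V := w x0 -ᵥ x0 with ht
    have htW : t ∉ W := by
      intro hmem
      exact hnofix ((fixed_iff w x0).2 hmem)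
    have ht0 : t ≠ 0 := fun h => htW (h ▸ W.zero_mem)
    -- refined lower bound
    have hlow2 : ∀ m ∈ S, k + 2 ≤ m := by
      rintro m ⟨l, hrefl, hlen, hprodw⟩
      obtain ⟨U, hUlen, hUmov, hUlin, hUkey⟩ := master l hrefl
      have hWU : W ≤ U := hWU_of l U hprodw hUmov
      have htU : t ∈ U := by
        have := hUmov x0
        rwa [hprodw] at this
      have hsup : W ⊔ (ℝ ∙ t) ≤ U :=
        sup_le hWU ((Submodule.span_singleton_le_iff_mem t U).2 htU)
      have hinfbot : (W ⊓ (ℝ ∙ t) : Submodule ℝ V) = ⊥ := by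
        rw [Submodule.eq_bot_iff]
        rintro u ⟨huW, hut⟩
        obtain ⟨s, rfl⟩ := Submodule.mem_span_singleton.1 hut
        rcases eq_or_ne s 0 with hs | hs
        · rw [hs, zero_smul]
        · exfalso
          apply htW
          have : t = s⁻¹ • (s • t) := by rw [smul_smul, inv_mul_cancel₀ hs, one_smul]
          rw [this]
          exact W.smul_mem _ huW
      have hsuprank : finrank ℝ (W ⊔ (ℝ ∙ t) : Submodule ℝ V) = k + 1 := by
        have h1 := Submodule.finrank_sup_add_finrank_inf_eq W (ℝ ∙ t)
        rw [hinfbot, finrank_bot, finrank_span_singleton ht0] at h1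
        omega
      have hk1 : k + 1 ≤ m := by
        have h2 : finrank ℝ (W ⊔ (ℝ ∙ t) : Submodule ℝ V) ≤ finrank ℝ U :=
          Submodule.finrank_mono hsup
        omega
      rcases Nat.lt_or_ge m (k + 2) with hm | hm
      · exfalso
        have hmk1 : m = k + 1 := by omega
        have hUrank : finrank ℝ U = l.length := by
          have h2 : finrank ℝ (W ⊔ (ℝ ∙ t) : Submodule ℝ V) ≤ finrank ℝ U :=
            Submodule.finrank_mono hsup
          omega
        have hker : LinearMap.ker (L.toLinearEquiv.toLinearMap - LinearMap.id) ≤ Uᗮ := by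
          intro v hv
          simp only [LinearMap.mem_ker, LinearMap.sub_apply, LinearMap.id_apply,
            LinearEquiv.coe_coe, LinearIsometryEquiv.coe_toLinearEquiv, sub_eq_zero] at hv
          apply hUkey hUrank
          rw [hprodw, ← hL]
          exact hv
        have hrn := LinearMap.finrank_range_add_finrank_ker
          (L.toLinearEquiv.toLinearMap - LinearMap.id : V →ₗ[ℝ] V)
        rw [← hWdef] at hrn
        have hkerle : finrank ℝ (LinearMap.ker
            (L.toLinearEquiv.toLinearMap - LinearMap.id : V →ₗ[ℝ] V)) ≤ finrank ℝ Uᗮ :=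
          Submodule.finrank_mono hker
        have hUorth := Submodule.finrank_add_finrank_orthogonal (K := U)
        omega
      · exact hm
    -- membership
    obtain ⟨tW, htWmem, tF, htFmem, hts⟩ := W.exists_add_mem_mem_orthogonal t
    have htF0 : tF ≠ 0 := by
      intro h
      apply htW
      rw [hts, h, add_zero]
      exact htWmem
    obtain ⟨z, hz⟩ := htWmem
    set x1 : E := (-z) +ᵥ x0 with hx1
    have hux : ∀ x : E, w x = tF +ᵥ atPoint x1 L x := by
      intro x
      have hwx0 : w x0 = t +ᵥ x0 := by rw [ht, vsub_vadd]
      have h1 : x -ᵥ x1 = (x -ᵥ x0) + z := by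
        rw [hx1, vsub_vadd_eq_vsub_sub, sub_neg_eq_add]
      have h2 : L z - z = tW := by
        simpa only [LinearMap.sub_apply, LinearMap.id_apply, LinearEquiv.coe_coe,
          LinearIsometryEquiv.coe_toLinearEquiv] using hz
      rw [atPoint_apply, apply_eq_lin w x0 x, hwx0, h1, map_add, hx1, ← hL]
      simp only [vadd_vadd]
      congr 1
      rw [hts, ← h2]
      abel
    set rF : V ≃ₗᵢ[ℝ] V := reflection (ℝ ∙ tF)ᗮ with hrF
    set r1 : E ≃ᵢ E := atPoint x1 rF with hr1
    set r2 : E ≃ᵢ E := atPoint ((2⁻¹ : ℝ) • tF +ᵥ x1) rF with hr2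
    have htrans : ∀ y : E, r2 (r1 y) = tF +ᵥ y := by
      intro y
      rw [hr1, hr2, atPoint_apply, atPoint_apply]
      have h1 : (rF (y -ᵥ x1) +ᵥ x1) -ᵥ ((2⁻¹ : ℝ) • tF +ᵥ x1) =
          rF (y -ᵥ x1) - (2⁻¹ : ℝ) • tF := by
        rw [vsub_vadd_eq_vsub_sub, vadd_vsub]
      rw [h1, map_sub, map_smul, hrF, reflection_reflection,
        reflection_orthogonalComplement_singleton_eq_neg]
      conv_rhs => rw [← vsub_vadd y x1]
      simp only [vadd_vadd]
      congr 1
      module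
    obtain ⟨A, hAlen, hAne, hAprod⟩ := cartan k L (by rw [← hWdef]; exact le_of_eq hkW.symm)
    set uList : List (E ≃ᵢ E) := A.map (fun α => atPoint x1 (reflection (ℝ ∙ α)ᗮ)) with hul
    have hcomp : (fun α : V => atPoint x1 (reflection (ℝ ∙ α)ᗮ)) =
        (atPoint x1) ∘ (fun α : V => (reflection (ℝ ∙ α)ᗮ : V ≃ₗᵢ[ℝ] V)) := rfl
    have huprod : uList.prod = atPoint x1 L := by
      rw [hul, hcomp, ← List.map_map, atPoint_prod, hAprod]
    set l : List (E ≃ᵢ E) := r2 :: r1 :: uList with hltot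
    have hlprod : l.prod = w := by
      ext x
      rw [hltot, List.prod_cons, List.prod_cons, IsometryEquiv.mul_apply,
        IsometryEquiv.mul_apply, huprod, htrans, hux]
    have hlrefl : ∀ r ∈ l, IsEuclideanReflection r := by
      intro r hr
      rw [hltot] at hr
      rcases List.mem_cons.1 hr with h | h
      · rw [h, hr2, hrF]; exact isReflection_atPoint _ tF htF0
      rcases List.mem_cons.1 h with h' | h'
      · rw [h', hr1, hrF]; exact isReflection_atPoint _ tF htF0
      · rw [hul] at h'
        obtain ⟨α, hα, rfl⟩ := List.mem_map.1 h'
        exact isReflection_atPoint x1 α (hAne α hα)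
    have hmem : l.length ∈ S := ⟨l, hlrefl, rfl, hlprod⟩
    have hle : l.length ≤ k + 2 := by
      rw [hltot, List.length_cons, List.length_cons, hul, List.length_map]
      omega
    have hge := hlow2 _ hmem
    have hkmem : k + 2 ∈ S := by
      have heq : l.length = k + 2 := le_antisymm hle hge
      rwa [heq] at hmem
    exact ⟨hkmem, hlow2⟩
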